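/- The set {(n, m) ∈ ℕ² : n = 2^m} is not a semilinear subset of ℕ²; in particular, the zero set of the 2-dimensional linear recurrence sequence s_{n,m} = uᵀ A^n B^m v with u = (0,1)ᵀ, v = (1,−1)ᵀ, A = [[1,0],[1,1]], B = [[1,0],[0,2]] is not a finite union of sets of the form {p + k₁q₁ + ⋯ + k_r q_r : k_i ∈ ℕ} with p, q_i ∈ ℕ². -/

import Mathlib

/-- A linear subset of ℕ²: all points p + k₁q₁ + ⋯ + k_r q_r. -/
def IsLinearSetNat2 (S : Set (ℕ × ℕ)) : Prop :=
  ∃ (p : ℕ × ℕ) (r : ℕ) (q : Fin r → ℕ × ℕ),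
    S = {x | ∃ c : Fin r → ℕ, x = p + ∑ i, c i • q i}

/-- A semilinear subset of ℕ²: a finite union of linear sets. -/
def IsSemilinearSetNat2 (S : Set (ℕ × ℕ)) : Prop :=
  ∃ (N : ℕ) (L : Fin N → Set (ℕ × ℕ)),
    (∀ i, IsLinearSetNat2 (L i)) ∧ S = ⋃ i, L i

theorem zero_set_of_two_lrs_not_semilinear :
    ¬ IsSemilinearSetNat2 {x : ℕ × ℕ | x.1 = 2 ^ x.2} := by
  rintro ⟨N, L, hlin, hS⟩
  have hmem : ∀ m : ℕ, ∃ i, ((2 ^ m, m) : ℕ × ℕ) ∈ L i := by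
    intro m
    have : ((2 ^ m, m) : ℕ × ℕ) ∈ {x : ℕ × ℕ | x.1 = 2 ^ x.2} := by simp
    rw [hS] at this
    exact Set.mem_iUnion.mp this
  choose f hf using hmem
  obtain ⟨a, b, hab, hfab⟩ := Finite.exists_ne_map_eq_of_infinite f
  obtain ⟨p, r, q, hL⟩ := hlin (f a)
  have ha : ((2 ^ a, a) : ℕ × ℕ) ∈ L (f a) := hf a
  have hb : ((2 ^ b, b) : ℕ × ℕ) ∈ L (f a) := hfab ▸ hf b
  rw [hL] at ha hb
  obtain ⟨c, hc⟩ := ha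
  obtain ⟨d, hd⟩ := hb
  -- some period must be nonzero
  have hq : ∃ j, q j ≠ 0 := by
    by_contra h
    push_neg at h
    have hz : ∀ e : Fin r → ℕ, ∑ i, e i • q i = 0 := by
      intro e
      apply Finset.sum_eq_zero
      intro i _
      rw [h i, smul_zero]
    rw [hz] at hc hd
    have : ((2 ^ a, a) : ℕ × ℕ) = (2 ^ b, b) := by rw [hc, hd]
    exact hab (congrArg Prod.snd this)
  obtain ⟨j, hj⟩ := hq
  -- adding q j to any element of L (f a) stays in it
  have hadd : ∀ x : ℕ × ℕ, x ∈ L (f a) → x + q j ∈ L (f a) := by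
    intro x hx
    rw [hL] at hx ⊢
    obtain ⟨e, he⟩ := hx
    refine ⟨fun i => e i + (if i = j then 1 else 0), ?_⟩
    have : ∑ i, (e i + (if i = j then 1 else 0)) • q i
        = ∑ i, e i • q i + ∑ i, (if i = j then 1 else 0) • q i := by
      simp_rw [add_smul]
      exact Finset.sum_add_distrib
    rw [this, he]
    have h2 : ∑ i, (if i = j then 1 else 0) • q i = q j := by
      have : ∀ i : Fin r, (if i = j then 1 else 0) • q i = if i = j then q i else 0 := by
        intro i; split <;> simp
      simp_rw [this]
      simp
    rw [h2, add_assoc]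
  -- membership in L (f a) implies the exponential equation
  have hsub : ∀ x : ℕ × ℕ, x ∈ L (f a) → x.1 = 2 ^ x.2 := by
    intro x hx
    have : x ∈ {x : ℕ × ℕ | x.1 = 2 ^ x.2} := by
      rw [hS]; exact Set.mem_iUnion.mpr ⟨f a, hx⟩
    exact this
  have hx0 : ((2 ^ a, a) : ℕ × ℕ) ∈ L (f a) := hf a
  have h1 := hsub _ (hadd _ hx0)
  have h2 := hsub _ (hadd _ (hadd _ hx0))
  simp only [Prod.fst_add, Prod.snd_add] at h1 h2
  set u := (q j).1 with hu
  set v := (q j).2 with hv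
  -- h1 : 2^a + u = 2^(a+v), h2 : 2^a + u + u = 2^(a+v+v)
  have hj' : ¬ (u = 0 ∧ v = 0) := by
    intro ⟨h1', h2'⟩
    exact hj (Prod.ext (hu ▸ h1'.symm).symm (hv ▸ h2'.symm).symm)
  rcases Nat.eq_zero_or_pos v with hv0 | hv1
  · rw [hv0, Nat.add_zero] at h1
    exact hj' ⟨by omega, hv0⟩
  · set s := (2 : ℕ) ^ a with hs
    set t := (2 : ℕ) ^ v with ht
    have hpa : (2 : ℕ) ^ (a + v) = s * t := pow_add 2 a v
    have hpb : (2 : ℕ) ^ (a + v + v) = s * t * t := by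
      rw [pow_add, hpa]
    rw [hpa] at h1
    rw [hpb] at h2
    have hs1 : 1 ≤ s := Nat.one_le_two_pow
    have ht2 : 2 ≤ t := by
      calc 2 = 2 ^ 1 := rfl
      _ ≤ 2 ^ v := Nat.pow_le_pow_right (by norm_num) hv1
    have key : s * t * 2 = s * t * t + s := by linarith [h1, h2]
    have h3 : s * t * 2 ≤ s * t * t := Nat.mul_le_mul_left _ ht2
    linarith [key, h3, hs1]
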